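/- Let R be a commutative ring with a group homomorphism χ : ℤ_p → Rˣ and an injective ring endomorphism φ : R → R with φ(χ(x)) = χ(p·x) and R = ⨁_{i=0}^{p-1} χ(i)·φ(R). Then for every positive integer c, the map X ↦ χ(1) induces a ring isomorphism φ^c(R)[X]/(X^{p^c} − χ(p^c)) ≅ R. -/

import Mathlib

open Polynomial Finset

section aux
variable {p : ℕ} [Fact p.Prime] {R : Type*} [CommRing R]

lemma chi_zero (χ : ℤ_[p] → Rˣ) (hχ : ∀ x y : ℤ_[p], χ (x + y) = χ x * χ y) :
    χ 0 = 1 := by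
  have h := hχ 0 0
  rw [add_zero] at h
  exact (left_eq_mul.mp h)

lemma chi_nat (χ : ℤ_[p] → Rˣ) (hχ : ∀ x y : ℤ_[p], χ (x + y) = χ x * χ y) (n : ℕ) :
    χ ((n : ℤ_[p])) = (χ 1) ^ n := by
  induction n with
  | zero => simpa using chi_zero χ hχ
  | succ n ih =>
    have : ((n + 1 : ℕ) : ℤ_[p]) = (n : ℤ_[p]) + 1 := by push_cast; ring
    rw [this, hχ, ih, pow_succ]

lemma key (χ : ℤ_[p] → Rˣ) (hχ : ∀ x y : ℤ_[p], χ (x + y) = χ x * χ y)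
    (φ : R →+* R) (hφ : Function.Injective φ)
    (hcompat : ∀ x : ℤ_[p], φ ((χ x : R)) = ((χ ((p : ℤ_[p]) * x) : R)))
    (hdirect : ∀ r : R, ∃! f : Fin p → R,
      r = ∑ i : Fin p, ((χ (((i : ℕ) : ℤ_[p])) : R)) * φ (f i)) :
    ∀ (c : ℕ) (r : R), ∃! g : Fin (p ^ c) → R,
      r = ∑ j : Fin (p ^ c), ((χ (((j : ℕ) : ℤ_[p])) : R)) * (φ ^ c : R →+* R) (g j) := by
  intro c
  induction c with
  | zero =>
    intro r
    haveI : Subsingleton (Fin (p ^ 0)) := by rw [pow_zero]; infer_instance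
    have i0 : Fin (p ^ 0) := ⟨0, by rw [pow_zero]; exact Nat.one_pos⟩
    have hsum0 : ∀ g : Fin (p ^ 0) → R,
        ∑ j : Fin (p ^ 0), ((χ (((j : ℕ) : ℤ_[p])) : R)) * (φ ^ 0 : R →+* R) (g j)
          = g i0 := by
      intro g
      rw [Finset.sum_eq_single_of_mem i0 (Finset.mem_univ i0)
        (fun b _ hb => absurd (Subsingleton.elim b i0) hb)]
      show ((χ (((i0 : ℕ) : ℤ_[p])) : R)) * (φ ^ 0 : R →+* R) (g i0) = g i0
      have : ((i0 : ℕ) : ℤ_[p]) = 0 := by norm_num; exact Subsingleton.elim _ _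
      rw [this]
      simp only [chi_zero χ hχ, Units.val_one, one_mul, pow_zero,
        RingHom.coe_one, id_eq]
    refine ⟨fun _ => r, ?_, ?_⟩
    · show r = _
      rw [hsum0]
    · intro g hg
      replace hg : r = ∑ j : Fin (p ^ 0),
          ((χ (((j : ℕ) : ℤ_[p])) : R)) * (φ ^ 0 : R →+* R) (g j) := hg
      rw [hsum0] at hg
      funext j
      rw [Subsingleton.elim j i0, ← hg]
  | succ c IH =>
    intro r
    set e : Fin (p ^ c) × Fin p ≃ Fin (p ^ (c + 1)) :=
      finProdFinEquiv.trans (finCongr (pow_succ p c).symm) with he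
    have heval : ∀ (j : Fin (p ^ c)) (i : Fin p),
        ((e (j, i) : ℕ)) = (i : ℕ) + p * (j : ℕ) := fun j i => rfl
    have hsplit : ∀ (j : Fin (p ^ c)) (i : Fin p),
        ((χ (((e (j, i) : ℕ) : ℤ_[p])) : R)) =
          ((χ (((i : ℕ) : ℤ_[p])) : R)) * φ ((χ (((j : ℕ) : ℤ_[p])) : R)) := by
      intro j i
      rw [heval, hcompat]
      have : (((i : ℕ) + p * (j : ℕ) : ℕ) : ℤ_[p]) =
          ((i : ℕ) : ℤ_[p]) + (p : ℤ_[p]) * ((j : ℕ) : ℤ_[p]) := by push_cast; ring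
      rw [this, hχ, Units.val_mul]
    have hpow : ∀ x : R, (φ ^ (c + 1) : R →+* R) x = φ ((φ ^ c : R →+* R) x) := by
      intro x
      rw [pow_succ']
      rfl
    have hsum : ∀ g : Fin (p ^ (c + 1)) → R,
        ∑ k : Fin (p ^ (c + 1)), ((χ (((k : ℕ) : ℤ_[p])) : R)) * (φ ^ (c + 1) : R →+* R) (g k)
          = ∑ i : Fin p, ((χ (((i : ℕ) : ℤ_[p])) : R)) *
              φ (∑ j : Fin (p ^ c), ((χ (((j : ℕ) : ℤ_[p])) : R)) *
                (φ ^ c : R →+* R) (g (e (j, i)))) := by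
      intro g
      rw [← Equiv.sum_comp e
        (fun k => ((χ (((k : ℕ) : ℤ_[p])) : R)) * (φ ^ (c + 1) : R →+* R) (g k))]
      rw [Fintype.sum_prod_type_right]
      refine Finset.sum_congr rfl fun i _ => ?_
      rw [map_sum, Finset.mul_sum]
      refine Finset.sum_congr rfl fun j _ => ?_
      rw [hsplit, hpow, map_mul]
      ring
    obtain ⟨f, hf, hfuniq⟩ := hdirect r
    choose g hg using fun i => (IH (f i)).exists
    refine ⟨fun k => g (e.symm k).2 (e.symm k).1, ?_, ?_⟩
    · show r = ∑ k : Fin (p ^ (c + 1)), ((χ (((k : ℕ) : ℤ_[p])) : R)) *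
        (φ ^ (c + 1) : R →+* R) (g (e.symm k).2 (e.symm k).1)
      rw [hsum]
      simp only [Equiv.symm_apply_apply]
      rw [hf]
      refine Finset.sum_congr rfl fun i _ => ?_
      rw [← hg i]
    · intro g₂ hg₂
      replace hg₂ : r = ∑ k : Fin (p ^ (c + 1)),
          ((χ (((k : ℕ) : ℤ_[p])) : R)) * (φ ^ (c + 1) : R →+* R) (g₂ k) := hg₂
      rw [hsum] at hg₂
      have hf₂ : (fun i => ∑ j : Fin (p ^ c), ((χ (((j : ℕ) : ℤ_[p])) : R)) *
          (φ ^ c : R →+* R) (g₂ (e (j, i)))) = f := hfuniq _ hg₂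
      funext k
      have h1 : f (e.symm k).2 = ∑ j : Fin (p ^ c), ((χ (((j : ℕ) : ℤ_[p])) : R)) *
          (φ ^ c : R →+* R) (g₂ (e (j, (e.symm k).2))) := (congrFun hf₂ (e.symm k).2).symm
      have h2 := (IH (f (e.symm k).2)).unique h1 (hg (e.symm k).2)
      have h3 := congrFun h2 (e.symm k).1
      try simp only at h3
      have h4 : e ((e.symm k).1, (e.symm k).2) = k := by
        rw [Prod.mk.eta, e.apply_symm_apply]
      rw [h4] at h3
      exact h3

end aux

/-- For a `φ`-ring `R` over `ℤ_p`, the map `X ↦ χ(1)` induces a ring isomorphism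
`φ^c(R)[X]/(X^{p^c} − χ(p^c)) ≅ R`. -/
theorem stmt1 (p : ℕ) [Fact p.Prime] (R : Type*) [CommRing R]
    (χ : ℤ_[p] → Rˣ) (hχ : ∀ x y : ℤ_[p], χ (x + y) = χ x * χ y)
    (φ : R →+* R) (hφ : Function.Injective φ)
    (hcompat : ∀ x : ℤ_[p], φ ((χ x : R)) = ((χ ((p : ℤ_[p]) * x) : R)))
    (hdirect : ∀ r : R, ∃! f : Fin p → R,
      r = ∑ i : Fin p, ((χ (((i : ℕ) : ℤ_[p])) : R)) * φ (f i))
    (c : ℕ) (hc : 0 < c)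
    (hmem : ((χ ((p : ℤ_[p]) ^ c) : R)) ∈ (φ ^ c : R →+* R).range) :
    ∃ e : (Polynomial ((φ ^ c : R →+* R).range) ⧸
        Ideal.span {(Polynomial.X : Polynomial ((φ ^ c : R →+* R).range)) ^ (p ^ c)
          - Polynomial.C (⟨_, hmem⟩ : (φ ^ c : R →+* R).range)}) ≃+* R,
      e ((Ideal.Quotient.mk _) Polynomial.X) = ((χ 1 : R)) := by
  classical
  set S : Subring R := (φ ^ c : R →+* R).range with hS
  set a : S := (⟨_, hmem⟩ : S) with ha
  set m : Polynomial S := Polynomial.X ^ (p ^ c) - Polynomial.C a with hm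
  set I : Ideal (Polynomial S) := Ideal.span {m} with hI
  set ev : Polynomial S →+* R := Polynomial.eval₂RingHom (S.subtype) ((χ 1 : R)) with hev
  -- χ(1)^{p^c} = χ(p^c)
  have hroot : ev m = 0 := by
    have h1 : ((p : ℤ_[p]) ^ c) = (((p ^ c : ℕ)) : ℤ_[p]) := by push_cast; ring
    have h2 : ((χ ((p : ℤ_[p]) ^ c) : R)) = ((χ 1 : R)) ^ (p ^ c) := by
      rw [h1, chi_nat χ hχ, Units.val_pow_eq_pow_val]
    show Polynomial.eval₂ (S.subtype) ((χ 1 : R)) m = 0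
    rw [hm, ha]
    simp only [Polynomial.eval₂_sub, Polynomial.eval₂_pow, Polynomial.eval₂_X,
      Polynomial.eval₂_C]
    show ((χ 1 : R)) ^ (p ^ c) - ((χ ((p : ℤ_[p]) ^ c) : R)) = 0
    rw [h2, sub_self]
  have hvanish : ∀ q ∈ I, ev q = 0 := by
    intro q hq
    obtain ⟨t, rfl⟩ := Ideal.mem_span_singleton'.mp hq
    rw [map_mul, hroot, mul_zero]
  set ψ : (Polynomial S ⧸ I) →+* R := Ideal.Quotient.lift I ev hvanish with hψ
  have hcpow : ∀ x : R, x ∈ S ↔ ∃ y, (φ ^ c : R →+* R) y = x := fun x => Iff.rfl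
  -- surjectivity
  have hsurj : Function.Surjective ψ := by
    intro r
    obtain ⟨g, hg, -⟩ := key χ hχ φ hφ hcompat hdirect c r
    refine ⟨Ideal.Quotient.mk I (∑ j : Fin (p ^ c),
      Polynomial.C (⟨(φ ^ c : R →+* R) (g j), ⟨g j, rfl⟩⟩ : S) * Polynomial.X ^ (j : ℕ)), ?_⟩
    rw [hψ, Ideal.Quotient.lift_mk, map_sum]
    rw [hg]
    refine Finset.sum_congr rfl fun j _ => ?_
    rw [map_mul, map_pow]
    simp only [hev, Polynomial.coe_eval₂RingHom, Polynomial.eval₂_C, Polynomial.eval₂_X]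
    show ((φ ^ c : R →+* R) (g j)) * ((χ 1 : R)) ^ (j : ℕ) = _
    rw [chi_nat χ hχ, Units.val_pow_eq_pow_val]
    ring
  -- injectivity
  have hinj : Function.Injective ψ := by
    refine RingHom.lift_injective_of_ker_le_ideal I hvanish ?_
    intro P hP
    rw [RingHom.mem_ker] at hP
    rcases subsingleton_or_nontrivial R with hR | hR
    · haveI : Subsingleton S := ⟨fun x y => Subtype.ext (Subsingleton.elim _ _)⟩
      rw [Subsingleton.elim P 0]
      exact I.zero_mem
    · haveI : Nontrivial S := ⟨⟨0, 1, fun h => zero_ne_one (congrArg (Subtype.val) h)⟩⟩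
      have hmonic : m.Monic :=
        Polynomial.monic_X_pow_sub_C a (pow_ne_zero c (Fact.out (p := p.Prime)).pos.ne')
      have hdeg : m.degree = (p ^ c : ℕ) := Polynomial.degree_X_pow_sub_C (pow_pos (Fact.out (p := p.Prime)).pos c) a
      set r0 : Polynomial S := P %ₘ m with hr0
      have hPdecomp : m * (P /ₘ m) + r0 = P := by
        rw [hr0, add_comm]; exact Polynomial.modByMonic_add_div P m
      have hev0 : ev r0 = 0 := by
        have : ev (m * (P /ₘ m) + r0) = 0 := by rw [hPdecomp]; exact hP
        rwa [map_add, map_mul, hroot, zero_mul, zero_add] at this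
      have hr0zero : r0 = 0 := by
        by_contra hne
        have hdlt : r0.natDegree < p ^ c := by
          have := Polynomial.degree_modByMonic_lt P hmonic
          rw [hdeg] at this
          exact (Polynomial.natDegree_lt_iff_degree_lt hne).mpr (by exact_mod_cast this)
        have hsum : (0 : R) = ∑ j : Fin (p ^ c),
            ((χ (((j : ℕ) : ℤ_[p])) : R)) * ((r0.coeff (j : ℕ) : R)) := by
          have := Polynomial.eval₂_eq_sum_range' (S.subtype) hdlt ((χ 1 : R))
          rw [← Polynomial.coe_eval₂RingHom, ← hev] at this
          rw [hev0] at this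
          rw [this, Finset.sum_range fun i => (S.subtype) (r0.coeff i) * ((χ 1 : R)) ^ i]
          refine Finset.sum_congr rfl fun j _ => ?_
          rw [chi_nat χ hχ, Units.val_pow_eq_pow_val]
          exact mul_comm _ _
        choose g hg using fun j : Fin (p ^ c) => (r0.coeff (j : ℕ)).2
        have h1 : (0 : R) = ∑ j : Fin (p ^ c),
            ((χ (((j : ℕ) : ℤ_[p])) : R)) * (φ ^ c : R →+* R) (g j) := by
          rw [hsum]
          refine Finset.sum_congr rfl fun j _ => ?_
          rw [hg j]
        have h2 : (0 : R) = ∑ j : Fin (p ^ c),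
            ((χ (((j : ℕ) : ℤ_[p])) : R)) * (φ ^ c : R →+* R) ((fun _ => (0 : R)) j) := by
          simp
        have h3 := (key χ hχ φ hφ hcompat hdirect c 0).unique h1 h2
        apply hne
        ext n
        rw [Polynomial.coeff_zero]
        rcases lt_or_ge n (p ^ c) with hn | hn
        · have := congrFun h3 ⟨n, hn⟩
          try simp only at this
          have hz : (r0.coeff n : R) = 0 := by
            rw [← hg ⟨n, hn⟩]
            show (φ ^ c : R →+* R) (g ⟨n, hn⟩) = 0
            rw [this, map_zero]
          exact_mod_cast hz
        · exact_mod_cast Polynomial.coeff_eq_zero_of_natDegree_lt (R := S)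
            (p := r0) (lt_of_lt_of_le hdlt hn)
      rw [hI, Ideal.mem_span_singleton']
      refine ⟨P /ₘ m, ?_⟩
      rw [mul_comm]
      conv_rhs => rw [← hPdecomp, hr0zero, add_zero]
  refine ⟨RingEquiv.ofBijective ψ ⟨hinj, hsurj⟩, ?_⟩
  show ψ (Ideal.Quotient.mk I Polynomial.X) = ((χ 1 : R))
  rw [hψ, Ideal.Quotient.lift_mk]
  simp [hev]
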